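/- arXiv:math/9712266 — 3 statements merged into one kernel-verified Lean document; each statement's English description precedes it below -/
import Mathlib

section
/- For an infinite path t = (v_0, v_1, …) in a branching diagram Γ, the following are equivalent: (i) all but finitely many vertices v_n in the path have v_{n-1} as their unique immediate predecessor; (ii) d(∅, t) := lim_n d(∅, v_n) < ∞; (iii) d(u, t) < ∞ for all vertices u. -/
/-- A branching diagram: a graded graph with finite levels, a unique minimal
vertex `bot` of rank `0`, no maximal vertices, and every vertex of positive
rank covering some vertex. `covers u w` means `w` covers `u` (`u ⋖ w`). -/
structure BranchingDiagram where
  V : Type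
  rank : V → ℕ
  covers : V → V → Prop
  rank_covers : ∀ u w, covers u w → rank w = rank u + 1
  finite_level : ∀ n : ℕ, {v : V | rank v = n}.Finite
  bot : V
  rank_bot : rank bot = 0
  bot_unique : ∀ v, rank v = 0 → v = bot
  no_max : ∀ v, ∃ w, covers v w
  exists_pred : ∀ v, rank v ≠ 0 → ∃ u, covers u v

/-- `Γ.d u w` is the number of saturated chains (paths along covering relations)
from `u` to `w`. -/
noncomputable def BranchingDiagram.d (Γ : BranchingDiagram) (u w : Γ.V) : ℕ :=
  Set.ncard {p : List Γ.V | p.Chain' Γ.covers ∧ p.head? = some u ∧ p.getLast? = some w}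

namespace BranchingDiagram

def chainSet (Γ : BranchingDiagram) (u w : Γ.V) : Set (List Γ.V) :=
  {p | p.Chain' Γ.covers ∧ p.head? = some u ∧ p.getLast? = some w}

lemma d_eq (Γ : BranchingDiagram) (u w : Γ.V) : Γ.d u w = (Γ.chainSet u w).ncard := rfl

variable {Γ : BranchingDiagram}

lemma ne_nil_of_mem {u w : Γ.V} {p : List Γ.V} (hp : p ∈ Γ.chainSet u w) : p ≠ [] := by
  intro h; subst h; exact absurd hp.2.1 (by simp)

lemma append_mem {u v w : Γ.V} (h : Γ.covers v w) {p : List Γ.V}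
    (hp : p ∈ Γ.chainSet u v) : p ++ [w] ∈ Γ.chainSet u w := by
  obtain ⟨hc, hh, hl⟩ := hp
  refine ⟨?_, ?_, List.getLast?_concat⟩
  · show List.IsChain _ _; rw [List.isChain_append]
    refine ⟨hc, List.isChain_singleton _, ?_⟩
    intro x hx y hy
    simp only [List.head?_cons, Option.mem_def, Option.some.injEq] at hy
    rw [hl] at hx
    simp only [Option.mem_def, Option.some.injEq] at hx
    subst hx; subst hy; exact h
  · rw [List.head?_append_of_ne_nil _ (ne_nil_of_mem ⟨hc, hh, hl⟩)]; exact hh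

lemma dropLast_mem {u w : Γ.V} {p : List Γ.V} (hp : p ∈ Γ.chainSet u w)
    (hq : p.dropLast ≠ []) :
    ∃ x, Γ.covers x w ∧ p.dropLast ∈ Γ.chainSet u x := by
  obtain ⟨hc, hh, hl⟩ := hp
  have hpe : p.dropLast ++ [w] = p := List.dropLast_append_getLast? w hl
  set q := p.dropLast with hqdef
  have hy : q.getLast? = some (q.getLast hq) := List.getLast?_eq_getLast hq
  rw [← hpe] at hc
  change List.IsChain _ _ at hc; rw [List.isChain_append] at hc
  obtain ⟨hcq, -, hlink⟩ := hc
  refine ⟨q.getLast hq, hlink _ hy w rfl, hcq, ?_, hy⟩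
  rw [← hpe, List.head?_append_of_ne_nil _ hq] at hh
  exact hh

lemma eq_of_dropLast_nil {u w : Γ.V} {p : List Γ.V} (hp : p ∈ Γ.chainSet u w)
    (hq : p.dropLast = []) : u = w := by
  obtain ⟨hc, hh, hl⟩ := hp
  match p, hq with
  | [a], _ =>
    simp only [List.head?_cons, Option.some.injEq] at hh
    simp only [List.getLast?_singleton, Option.some.injEq] at hl
    subst hh; exact hl
  | a :: b :: r, hq => simp at hq

lemma eq_singleton_of_dropLast_nil {u w : Γ.V} {p : List Γ.V} (hp : p ∈ Γ.chainSet u w)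
    (hq : p.dropLast = []) : p = [w] := by
  have := List.dropLast_append_getLast? w hp.2.2
  rw [hq] at this
  simpa using this.symm

lemma chainSet_subset (u w : Γ.V) :
    Γ.chainSet u w ⊆ insert [w] (⋃ x ∈ {x | Γ.covers x w}, (· ++ [w]) '' Γ.chainSet u x) := by
  intro p hp
  by_cases hq : p.dropLast = []
  · left; exact eq_singleton_of_dropLast_nil hp hq
  · right
    obtain ⟨x, hx, hmem⟩ := dropLast_mem hp hq
    simp only [Set.mem_iUnion, Set.mem_image]
    exact ⟨x, hx, p.dropLast, hmem, List.dropLast_append_getLast? w hp.2.2⟩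

lemma chainSet_finite (u w : Γ.V) : (Γ.chainSet u w).Finite := by
  suffices h : ∀ n (w : Γ.V), Γ.rank w ≤ n → (Γ.chainSet u w).Finite from h _ w le_rfl
  intro n
  induction n with
  | zero =>
    intro w hw
    apply Set.Finite.subset _ (chainSet_subset u w)
    apply Set.Finite.insert
    have hP : {x | Γ.covers x w} = ∅ := by
      ext x
      simp only [Set.mem_setOf_eq, Set.mem_empty_iff_false, iff_false]
      intro hx
      have := Γ.rank_covers x w hx
      omega
    rw [hP]; simp
  | succ n ih =>
    intro w hw
    apply Set.Finite.subset _ (chainSet_subset u w)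
    apply Set.Finite.insert
    apply Set.Finite.biUnion
    · apply (Γ.finite_level (Γ.rank w - 1)).subset
      intro x hx
      have := Γ.rank_covers x w hx
      simp only [Set.mem_setOf_eq]; omega
    · intro x hx
      have := Γ.rank_covers x w hx
      exact (ih x (by omega)).image _

lemma exists_chain (v : Γ.V) : (Γ.chainSet Γ.bot v).Nonempty := by
  suffices h : ∀ n (v : Γ.V), Γ.rank v ≤ n → (Γ.chainSet Γ.bot v).Nonempty from h _ v le_rfl
  intro n
  induction n with
  | zero =>
    intro v hv
    have hb := Γ.bot_unique v (by omega)
    exact ⟨[Γ.bot], List.isChain_singleton _, rfl, by simp [hb]⟩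
  | succ n ih =>
    intro v hv
    by_cases h0 : Γ.rank v = 0
    · have hb := Γ.bot_unique v h0
      exact ⟨[Γ.bot], List.isChain_singleton _, rfl, by simp [hb]⟩
    · obtain ⟨x, hx⟩ := Γ.exists_pred v h0
      have := Γ.rank_covers x v hx
      obtain ⟨p, hp⟩ := ih x (by omega)
      exact ⟨p ++ [v], append_mem hx hp⟩

lemma d_mono {u v w : Γ.V} (h : Γ.covers v w) : Γ.d u v ≤ Γ.d u w := by
  rw [d_eq, d_eq]
  refine Set.ncard_le_ncard_of_injOn (· ++ [w]) ?_ ?_ (chainSet_finite u w)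
  · intro p hp; exact append_mem h hp
  · intro p _ q _ he
    simpa using congrArg List.dropLast he

lemma one_le_d_bot (v : Γ.V) : 1 ≤ Γ.d Γ.bot v := by
  rw [d_eq]
  exact (Set.ncard_pos (chainSet_finite _ _)).mpr (exists_chain v)

lemma d_drop {u v w : Γ.V} (huw : u ≠ w) (hu : ∀ x, Γ.covers x w → x = v) :
    Γ.d u w ≤ Γ.d u v := by
  rw [d_eq, d_eq]
  refine Set.ncard_le_ncard_of_injOn List.dropLast ?_ ?_ (chainSet_finite u v)
  · intro p hp
    have hq : p.dropLast ≠ [] := fun h => huw (eq_of_dropLast_nil hp h)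
    obtain ⟨x, hx, hm⟩ := dropLast_mem hp hq
    rwa [hu x hx] at hm
  · intro p hp q hq he
    have h1 := List.dropLast_append_getLast? w hp.2.2
    have h2 := List.dropLast_append_getLast? w hq.2.2
    rw [← h1, ← h2, he]

lemma d_strict {v v' w : Γ.V} (h : Γ.covers v w) (h' : Γ.covers v' w) (hne : v' ≠ v) :
    Γ.d Γ.bot v + 1 ≤ Γ.d Γ.bot w := by
  obtain ⟨e, he⟩ := exists_chain (Γ := Γ) v'
  rw [d_eq, d_eq]
  have hfin := chainSet_finite (Γ := Γ) Γ.bot w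
  have hinj : Set.InjOn (· ++ [w]) (Γ.chainSet Γ.bot v) := by
    intro p _ q _ he2
    simpa using congrArg List.dropLast he2
  have hins : insert (e ++ [w]) ((· ++ [w]) '' Γ.chainSet Γ.bot v) ⊆ Γ.chainSet Γ.bot w := by
    rw [Set.insert_subset_iff]
    refine ⟨append_mem h' he, ?_⟩
    rintro _ ⟨p, hp, rfl⟩
    exact append_mem h hp
  have hnot : e ++ [w] ∉ (· ++ [w]) '' Γ.chainSet Γ.bot v := by
    rintro ⟨p, hp, hpe⟩
    have hpe2 : p = e := by simpa using congrArg List.dropLast hpe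
    subst hpe2
    have h3 := hp.2.2
    rw [he.2.2] at h3
    exact hne (Option.some_injective _ h3)
  calc (Γ.chainSet Γ.bot v).ncard + 1
      = ((· ++ [w]) '' Γ.chainSet Γ.bot v).ncard + 1 := by
        rw [Set.ncard_image_of_injOn hinj]
    _ = (insert (e ++ [w]) ((· ++ [w]) '' Γ.chainSet Γ.bot v)).ncard :=
        (Set.ncard_insert_of_notMem hnot ((chainSet_finite _ _).image _)).symm
    _ ≤ _ := Set.ncard_le_ncard hins hfin

lemma rank_path (t : ℕ → Γ.V) (ht : ∀ n, Γ.covers (t n) (t (n + 1))) (n : ℕ) :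
    n ≤ Γ.rank (t n) := by
  induction n with
  | zero => exact Nat.zero_le _
  | succ n ih => have := Γ.rank_covers _ _ (ht n); omega

lemma d_mono_path {u : Γ.V} (t : ℕ → Γ.V) (ht : ∀ n, Γ.covers (t n) (t (n + 1)))
    {n m : ℕ} (h : n ≤ m) : Γ.d u (t n) ≤ Γ.d u (t m) := by
  induction m, h using Nat.le_induction with
  | base => exact le_rfl
  | succ m hm ih => exact ih.trans (d_mono (ht m))

end BranchingDiagram

/-- A `1`-differential poset: (D1) for distinct vertices of equal rank, the number
of common lower covers equals the number of common upper covers; (D2) each vertex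
is covered by one more vertex than it covers. -/
def BranchingDiagram.IsDifferential (Γ : BranchingDiagram) : Prop :=
  (∀ u v : Γ.V, u ≠ v → Γ.rank u = Γ.rank v →
      Set.ncard {x | Γ.covers x u ∧ Γ.covers x v} =
        Set.ncard {w | Γ.covers u w ∧ Γ.covers v w}) ∧
  (∀ v : Γ.V, Set.ncard {w | Γ.covers v w} = Set.ncard {u | Γ.covers u v} + 1)

/-- For an infinite path `t` in a branching diagram, the following are equivalent:
(i) all but finitely many vertices `t (n+1)` have `t n` as unique immediate
predecessor; (ii) `d(∅,t) < ∞`; (iii) `d(u,t) < ∞` for all vertices `u`.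
(Finiteness of the limit of the weakly increasing integer sequence `n ↦ d(u, t n)`
is expressed as boundedness.) -/
theorem stmt_7 (Γ : BranchingDiagram) (t : ℕ → Γ.V)
    (ht : ∀ n, Γ.covers (t n) (t (n + 1))) :
    ((∃ N, ∀ n, N ≤ n → ∀ u, Γ.covers u (t (n + 1)) → u = t n) ↔
        (∃ C, ∀ n, Γ.d Γ.bot (t n) ≤ C)) ∧
    ((∃ C, ∀ n, Γ.d Γ.bot (t n) ≤ C) ↔
        (∀ u, ∃ C, ∀ n, Γ.d u (t n) ≤ C)) := by
  have hAC : (∃ N, ∀ n, N ≤ n → ∀ u, Γ.covers u (t (n + 1)) → u = t n) →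
      (∀ u, ∃ C, ∀ n, Γ.d u (t n) ≤ C) := by
    rintro ⟨N, hN⟩ u
    set M := max N (Γ.rank u + 1) with hM
    have hstep : ∀ n, M ≤ n → Γ.d u (t (n + 1)) ≤ Γ.d u (t n) := by
      intro n hn
      have hM2 : Γ.rank u + 1 ≤ M := le_max_right _ _
      refine BranchingDiagram.d_drop ?_ (hN n (le_trans (le_max_left _ _) hn))
      intro hu
      have h1 := BranchingDiagram.rank_path t ht (n + 1)
      rw [← hu] at h1
      omega
    have hbound : ∀ n, M ≤ n → Γ.d u (t n) ≤ Γ.d u (t M) := by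
      intro n hn
      induction n, hn using Nat.le_induction with
      | base => exact le_rfl
      | succ n hn ih => exact (hstep n hn).trans ih
    refine ⟨(Finset.range (M + 1)).sup (fun k => Γ.d u (t k)), fun n => ?_⟩
    rcases le_or_gt n M with h | h
    · have hmem : n ∈ Finset.range (M + 1) := Finset.mem_range.mpr (by omega)
      exact Finset.le_sup (f := fun k => Γ.d u (t k)) hmem
    · have hmem : M ∈ Finset.range (M + 1) := Finset.mem_range.mpr (by omega)
      exact le_trans (hbound n h.le) (Finset.le_sup (f := fun k => Γ.d u (t k)) hmem)
  have hCB : (∀ u, ∃ C, ∀ n, Γ.d u (t n) ≤ C) → (∃ C, ∀ n, Γ.d Γ.bot (t n) ≤ C) :=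
    fun h => h Γ.bot
  have hBA : (∃ C, ∀ n, Γ.d Γ.bot (t n) ≤ C) →
      (∃ N, ∀ n, N ≤ n → ∀ u, Γ.covers u (t (n + 1)) → u = t n) := by
    rintro ⟨C, hC⟩
    by_contra hA
    push_neg at hA
    have key : ∀ c : ℕ, ∃ n, c ≤ Γ.d Γ.bot (t n) := by
      intro c
      induction c with
      | zero => exact ⟨0, Nat.zero_le _⟩
      | succ c ih =>
        obtain ⟨n, hn⟩ := ih
        obtain ⟨m, hm, u, hu, hune⟩ := hA n
        refine ⟨m + 1, ?_⟩
        have h1 : Γ.d Γ.bot (t n) ≤ Γ.d Γ.bot (t m) := BranchingDiagram.d_mono_path t ht hm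
        have h2 : Γ.d Γ.bot (t m) + 1 ≤ Γ.d Γ.bot (t (m + 1)) :=
          BranchingDiagram.d_strict (ht m) hu hune
        omega
    obtain ⟨n, hn⟩ := key (C + 1)
    exact absurd (hC n) (by omega)
  exact ⟨⟨fun a => hCB (hAC a), hBA⟩, ⟨fun b => hAC (hBA b), hCB⟩⟩
end

section
/- In a 1-differential poset Γ, the function φ_P(v) = d(∅, v)/n!, where n = |v|, is a non-negative normalized harmonic function: φ_P(∅) = 1 and φ_P(v) = Σ_{w : v ⋖ w} φ_P(w) for all v. -/
open scoped Classical

namespace BranchingDiagram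

variable (Γ : BranchingDiagram)

/-- The set of saturated chains from `u` to `w`. -/
def pathSet (u w : Γ.V) : Set (List Γ.V) :=
  {p | p.Chain' Γ.covers ∧ p.head? = some u ∧ p.getLast? = some w}

lemma d_eq_pathSet (u w : Γ.V) : Γ.d u w = (Γ.pathSet u w).ncard := rfl

lemma rank_path_s11 : ∀ (p : List Γ.V) (u w : Γ.V), p.Chain' Γ.covers →
    p.head? = some u → p.getLast? = some w →
    Γ.rank w + 1 = Γ.rank u + p.length := by
  intro p
  induction p with
  | nil => intro u w _ h; simp at h
  | cons a q ih =>
    intro u w hc hh hl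
    simp only [List.head?_cons, Option.some.injEq] at hh
    subst hh
    match q, hc, hl, ih with
    | [], _, hl, _ =>
      simp only [List.getLast?_singleton, Option.some.injEq] at hl
      subst hl; simp
    | b :: q', hc, hl, ih =>
      rw [show List.Chain' Γ.covers (a :: b :: q') ↔ _ from List.isChain_cons_cons] at hc
      rw [List.getLast?_cons_cons] at hl
      have h1 := ih b w hc.2 rfl hl
      have h2 := Γ.rank_covers a b hc.1
      simp only [List.length_cons] at h1 ⊢
      omega

lemma pathSet_self (u : Γ.V) : Γ.pathSet u u = {[u]} := by
  ext p
  constructor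
  · rintro ⟨hc, hh, hl⟩
    have hrk := Γ.rank_path_s11 p u u hc hh hl
    have hlen : p.length = 1 := by omega
    obtain ⟨a, rfl⟩ := List.length_eq_one_iff.mp hlen
    simp only [List.head?_cons, Option.some.injEq] at hh
    subst hh
    rfl
  · intro hp
    rw [Set.mem_singleton_iff] at hp
    subst hp
    exact ⟨List.isChain_singleton u, rfl, rfl⟩

lemma pathSet_eq_empty (u w : Γ.V) (hr : Γ.rank w = Γ.rank u) (hne : w ≠ u) :
    Γ.pathSet u w = ∅ := by
  ext p
  simp only [Set.mem_empty_iff_false, iff_false]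
  rintro ⟨hc, hh, hl⟩
  have hrk := Γ.rank_path_s11 p u w hc hh hl
  have hlen : p.length = 1 := by omega
  obtain ⟨a, rfl⟩ := List.length_eq_one_iff.mp hlen
  simp only [List.head?_cons, List.getLast?_singleton, Option.some.injEq] at hh hl
  exact hne (hl ▸ hh ▸ rfl)

lemma pathSet_decomp (u w : Γ.V) (h : Γ.rank w ≠ Γ.rank u) :
    Γ.pathSet u w = ⋃ x ∈ {x | Γ.covers x w}, (fun q => q ++ [w]) '' Γ.pathSet u x := by
  ext p
  simp only [Set.mem_iUnion, Set.mem_image, Set.mem_setOf_eq, exists_prop]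
  constructor
  · rintro ⟨hc, hh, hl⟩
    have hrk := Γ.rank_path_s11 p u w hc hh hl
    have hp : p ≠ [] := by rintro rfl; simp at hh
    have hp1 : 1 ≤ p.length := List.length_pos_iff.mpr hp
    have hlen : 2 ≤ p.length := by
      rcases Nat.lt_or_ge p.length 2 with h2 | h2
      · exfalso; apply h; omega
      · exact h2
    have hplw : p.dropLast ++ [w] = p := List.dropLast_append_getLast? w hl
    have hq : p.dropLast ≠ [] := by
      intro h0
      have := p.length_dropLast
      rw [h0, List.length_nil] at this
      omega
    set q := p.dropLast with hqdef
    rw [← hplw] at hc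
    rw [show List.Chain' Γ.covers (q ++ [w]) ↔ _ from List.isChain_append] at hc
    obtain ⟨hc1, _, hlast⟩ := hc
    have hx : q.getLast? = some (q.getLast hq) := List.getLast?_eq_getLast_of_ne_nil hq
    refine ⟨q.getLast hq, ?_, q, ⟨hc1, ?_, hx⟩, hplw⟩
    · exact hlast _ hx w rfl
    · rw [← hplw, List.head?_append_of_ne_nil q hq] at hh
      exact hh
  · rintro ⟨x, hx, q, ⟨hc, hh, hl⟩, rfl⟩
    have hq : q ≠ [] := by rintro rfl; simp at hh
    refine ⟨?_, ?_, ?_⟩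
    · rw [show List.Chain' Γ.covers (q ++ [w]) ↔ _ from List.isChain_append]
      refine ⟨hc, List.isChain_singleton w, ?_⟩
      intro a ha b hb
      simp only [List.head?_cons, Option.mem_def, Option.some.injEq] at hb
      subst hb
      rw [Option.mem_def, hl] at ha
      cases ha
      exact hx
    · rw [List.head?_append_of_ne_nil q hq]; exact hh
    · simp

lemma lower_finite (w : Γ.V) : {x | Γ.covers x w}.Finite :=
  (Γ.finite_level (Γ.rank w - 1)).subset fun x hx => by
    have := Γ.rank_covers x w hx
    simp only [Set.mem_setOf_eq]
    omega

lemma upper_finite (v : Γ.V) : {w | Γ.covers v w}.Finite :=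
  (Γ.finite_level (Γ.rank v + 1)).subset fun w hw => by
    have := Γ.rank_covers v w hw
    simpa using this

lemma pathSet_finite : ∀ (k : ℕ) (u w : Γ.V), Γ.rank w = Γ.rank u + k →
    (Γ.pathSet u w).Finite := by
  intro k
  induction k with
  | zero =>
    intro u w h
    by_cases hw : w = u
    · subst hw; rw [pathSet_self]; exact Set.finite_singleton _
    · rw [Γ.pathSet_eq_empty u w (by omega) hw]; exact Set.finite_empty
  | succ k ih =>
    intro u w h
    rw [Γ.pathSet_decomp u w (by omega)]
    exact Set.Finite.biUnion (Γ.lower_finite w) fun x hx =>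
      (ih u x (by have := Γ.rank_covers x w hx; omega)).image _

lemma ncard_biUnion_eq {α β : Type*} (s : Finset α) (f : α → Set β)
    (hf : ∀ a ∈ s, (f a).Finite)
    (hd : ∀ a ∈ s, ∀ b ∈ s, a ≠ b → Disjoint (f a) (f b)) :
    (⋃ a ∈ s, f a).ncard = ∑ a ∈ s, (f a).ncard := by
  classical
  induction s using Finset.induction_on with
  | empty => simp
  | @insert a s ha ih =>
    rw [Finset.set_biUnion_insert, Finset.sum_insert ha]
    have hfin : (⋃ b ∈ s, f b).Finite :=
      Set.Finite.biUnion s.finite_toSet fun b hb => hf b (Finset.mem_insert_of_mem hb)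
    have hdis : Disjoint (f a) (⋃ b ∈ s, f b) := by
      rw [Set.disjoint_left]
      intro x hx hx'
      simp only [Set.mem_iUnion, exists_prop] at hx'
      obtain ⟨b, hb, hxb⟩ := hx'
      have hba : a ≠ b := by rintro rfl; exact ha hb
      exact Set.disjoint_left.mp
        (hd a (Finset.mem_insert_self a s) b (Finset.mem_insert_of_mem hb) hba) hx hxb
    rw [Set.ncard_union_eq hdis (hf a (Finset.mem_insert_self a s)) hfin,
      ih (fun b hb => hf b (Finset.mem_insert_of_mem hb))
        (fun b hb c hc => hd b (Finset.mem_insert_of_mem hb) c (Finset.mem_insert_of_mem hc))]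

lemma d_rec (u w : Γ.V) (k : ℕ) (h : Γ.rank w = Γ.rank u + (k + 1)) :
    Γ.d u w = ∑ x ∈ (Γ.lower_finite w).toFinset, Γ.d u x := by
  have hx_rank : ∀ x ∈ (Γ.lower_finite w).toFinset, Γ.rank x = Γ.rank u + k := by
    intro x hx
    rw [Set.Finite.mem_toFinset] at hx
    have := Γ.rank_covers x w hx; omega
  have hinj : Function.Injective (fun q : List Γ.V => q ++ [w]) := by
    intro q q' hqq
    simpa using hqq
  rw [d_eq_pathSet, Γ.pathSet_decomp u w (by omega)]
  have hU : (⋃ x ∈ {x | Γ.covers x w}, (fun q => q ++ [w]) '' Γ.pathSet u x) =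
      ⋃ x ∈ (Γ.lower_finite w).toFinset, (fun q => q ++ [w]) '' Γ.pathSet u x := by
    ext p
    simp [Set.Finite.mem_toFinset]
  rw [hU]
  rw [ncard_biUnion_eq _ _ ?hf ?hd]
  · refine Finset.sum_congr rfl fun x hx => ?_
    rw [Set.ncard_image_of_injective _ hinj, d_eq_pathSet]
  case hf =>
    intro x hx
    exact (Γ.pathSet_finite k u x (hx_rank x hx)).image _
  case hd =>
    intro a ha b hb hab
    rw [Set.disjoint_left]
    rintro p ⟨q, ⟨_, _, hql⟩, rfl⟩ ⟨q', ⟨_, _, hql'⟩, heq⟩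
    have hq : q' = q := hinj heq
    subst hq
    rw [hql] at hql'
    exact hab (by injection hql')

lemma d_bot_rec (w : Γ.V) (hw : Γ.rank w ≠ 0) :
    Γ.d Γ.bot w = ∑ x ∈ (Γ.lower_finite w).toFinset, Γ.d Γ.bot x :=
  Γ.d_rec Γ.bot w (Γ.rank w - 1) (by rw [Γ.rank_bot]; omega)

lemma d_self (u : Γ.V) : Γ.d u u = 1 := by
  rw [d_eq_pathSet, pathSet_self]
  exact Set.ncard_singleton _

lemma key (hΓ : Γ.IsDifferential) : ∀ (n : ℕ) (v : Γ.V), Γ.rank v = n →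
    ∑ w ∈ (Γ.upper_finite v).toFinset, Γ.d Γ.bot w = (n + 1) * Γ.d Γ.bot v := by
  intro n
  induction n using Nat.strong_induction_on with
  | _ n ih =>
    intro v hv
    set D := Γ.d Γ.bot with hD
    -- ranks of upper covers
    have hup_rank : ∀ w ∈ (Γ.upper_finite v).toFinset, Γ.rank w = n + 1 := by
      intro w hw
      rw [Set.Finite.mem_toFinset] at hw
      have := Γ.rank_covers v w hw; omega
    -- step 1: expand D w
    have step1 : ∑ w ∈ (Γ.upper_finite v).toFinset, D w =
        ∑ w ∈ (Γ.upper_finite v).toFinset, ∑ x ∈ (Γ.lower_finite w).toFinset, D x := by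
      refine Finset.sum_congr rfl fun w hw => ?_
      exact Γ.d_bot_rec w (by rw [hup_rank w hw]; omega)
    -- step 2: inner sums over the level
    have hlo_eq : ∀ w ∈ (Γ.upper_finite v).toFinset,
        (Γ.lower_finite w).toFinset =
          (Γ.finite_level n).toFinset.filter (fun x => Γ.covers x w) := by
      intro w hw
      ext x
      simp only [Set.Finite.mem_toFinset, Finset.mem_filter, Set.mem_setOf_eq]
      constructor
      · intro hx
        have := Γ.rank_covers x w hx
        have := hup_rank w hw
        exact ⟨by omega, hx⟩
      · exact fun hx => hx.2
    have step2 : ∑ w ∈ (Γ.upper_finite v).toFinset, ∑ x ∈ (Γ.lower_finite w).toFinset, D x =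
        ∑ x ∈ (Γ.finite_level n).toFinset, ∑ w ∈ (Γ.upper_finite v).toFinset,
          (if Γ.covers x w then D x else 0) := by
      rw [Finset.sum_comm]
      refine Finset.sum_congr rfl fun w hw => ?_
      rw [hlo_eq w hw, Finset.sum_filter]
    -- step 4: count
    have step4 : ∀ x, ∑ w ∈ (Γ.upper_finite v).toFinset, (if Γ.covers x w then D x else 0) =
        Set.ncard {w | Γ.covers v w ∧ Γ.covers x w} * D x := by
      intro x
      rw [← Finset.sum_filter, Finset.sum_const, smul_eq_mul]
      congr 1
      rw [← Set.ncard_coe_finset]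
      congr 1
      ext w
      simp [Set.Finite.mem_toFinset]
    -- the sum with up-degrees
    have hvlev : v ∈ (Γ.finite_level n).toFinset := by
      simp [Set.Finite.mem_toFinset, hv]
    -- rewrite to down-degrees
    have hx_rank : ∀ x ∈ (Γ.finite_level n).toFinset, Γ.rank x = n := by
      intro x hx; rwa [Set.Finite.mem_toFinset] at hx
    have updown : ∀ x ∈ (Γ.finite_level n).toFinset.erase v,
        Set.ncard {w | Γ.covers v w ∧ Γ.covers x w} =
          Set.ncard {y | Γ.covers y v ∧ Γ.covers y x} := by
      intro x hx
      have hxv : x ≠ v := Finset.ne_of_mem_erase hx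
      have hxr : Γ.rank x = n := hx_rank x (Finset.mem_of_mem_erase hx)
      have := hΓ.1 v x (fun hh => hxv hh.symm) (by omega)
      rw [← this]
    have upvv : Set.ncard {w | Γ.covers v w ∧ Γ.covers v w} =
        Set.ncard {y | Γ.covers y v ∧ Γ.covers y v} + 1 := by
      simpa using hΓ.2 v
    -- combine: total = D v + sum of down-degrees over level
    have step5 : ∑ x ∈ (Γ.finite_level n).toFinset,
          Set.ncard {w | Γ.covers v w ∧ Γ.covers x w} * D x =
        D v + ∑ x ∈ (Γ.finite_level n).toFinset,
          Set.ncard {y | Γ.covers y v ∧ Γ.covers y x} * D x := by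
      rw [← Finset.add_sum_erase _ _ hvlev, ← Finset.add_sum_erase _
        (fun x => Set.ncard {y | Γ.covers y v ∧ Γ.covers y x} * D x) hvlev]
      have herase : ∑ x ∈ (Γ.finite_level n).toFinset.erase v,
            Set.ncard {w | Γ.covers v w ∧ Γ.covers x w} * D x =
          ∑ x ∈ (Γ.finite_level n).toFinset.erase v,
            Set.ncard {y | Γ.covers y v ∧ Γ.covers y x} * D x :=
        Finset.sum_congr rfl fun x hx => by rw [updown x hx]
      rw [herase, upvv]
      ring
    -- step 6: down sums via lower covers
    have step6 : ∑ x ∈ (Γ.finite_level n).toFinset,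
          Set.ncard {y | Γ.covers y v ∧ Γ.covers y x} * D x =
        ∑ y ∈ (Γ.lower_finite v).toFinset, ∑ x ∈ (Γ.upper_finite y).toFinset, D x := by
      have hcount : ∀ x, Set.ncard {y | Γ.covers y v ∧ Γ.covers y x} * D x =
          ∑ y ∈ (Γ.lower_finite v).toFinset, (if Γ.covers y x then D x else 0) := by
        intro x
        rw [← Finset.sum_filter, Finset.sum_const, smul_eq_mul]
        congr 1
        rw [← Set.ncard_coe_finset]
        congr 1
        ext y
        simp [Set.Finite.mem_toFinset]
      rw [Finset.sum_congr rfl fun x _ => hcount x, Finset.sum_comm]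
      refine Finset.sum_congr rfl fun y hy => ?_
      rw [Set.Finite.mem_toFinset] at hy
      have hyr := Γ.rank_covers y v hy
      have hupy : (Γ.upper_finite y).toFinset =
          (Γ.finite_level n).toFinset.filter (fun x => Γ.covers y x) := by
        ext x
        simp only [Set.Finite.mem_toFinset, Finset.mem_filter, Set.mem_setOf_eq]
        constructor
        · intro hx
          have := Γ.rank_covers y x hx
          exact ⟨by omega, hx⟩
        · exact fun hx => hx.2
      rw [hupy, Finset.sum_filter]
    -- step 7: apply IH
    have step7 : ∑ y ∈ (Γ.lower_finite v).toFinset, ∑ x ∈ (Γ.upper_finite y).toFinset, D x =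
        n * D v := by
      rcases Nat.eq_zero_or_pos n with hn | hn
      · have : (Γ.lower_finite v).toFinset = ∅ := by
          ext y
          simp only [Set.Finite.mem_toFinset, Set.mem_setOf_eq, Finset.notMem_empty,
            iff_false]
          intro hy
          have := Γ.rank_covers y v hy
          omega
        rw [this]
        simp [hn]
      · have hrecv := Γ.d_bot_rec v (by omega)
        have hterm : ∀ y ∈ (Γ.lower_finite v).toFinset,
            ∑ x ∈ (Γ.upper_finite y).toFinset, D x = n * D y := by
          intro y hy
          rw [Set.Finite.mem_toFinset] at hy
          have hyr := Γ.rank_covers y v hy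
          have hym : Γ.rank y < n := by omega
          rw [ih (Γ.rank y) hym y rfl]
          congr 1
          omega
        rw [Finset.sum_congr rfl hterm, ← Finset.mul_sum, ← hrecv]
    rw [step1, step2, Finset.sum_congr rfl fun x _ => step4 x, step5, step6, step7]
    -- need recursion for D v again? result: D v + n * D v = (n+1) * D v
    ring

end BranchingDiagram

/-- In a `1`-differential poset, the Plancherel function `φ_P(v) = d(∅,v)/n!`
(`n = |v|`) is a non-negative normalized harmonic function. -/
theorem stmt_11 (Γ : BranchingDiagram) (hΓ : Γ.IsDifferential) :
    (Γ.d Γ.bot Γ.bot : ℝ) / (Γ.rank Γ.bot).factorial = 1 ∧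
    (∀ v, 0 ≤ (Γ.d Γ.bot v : ℝ) / (Γ.rank v).factorial) ∧
    (∀ v, (Γ.d Γ.bot v : ℝ) / (Γ.rank v).factorial =
      ∑ᶠ w ∈ {w | Γ.covers v w}, (Γ.d Γ.bot w : ℝ) / (Γ.rank w).factorial) := by
  refine ⟨?_, ?_, ?_⟩
  · rw [Γ.d_self, Γ.rank_bot]
    simp
  · intro v
    positivity
  · intro v
    set n := Γ.rank v with hn
    have hset : {w | Γ.covers v w} = ↑(Γ.upper_finite v).toFinset := by simp
    rw [hset, finsum_mem_coe_finset]
    have hup_rank : ∀ w ∈ (Γ.upper_finite v).toFinset, Γ.rank w = n + 1 := by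
      intro w hw
      rw [Set.Finite.mem_toFinset] at hw
      have := Γ.rank_covers v w hw; omega
    rw [Finset.sum_congr rfl fun w hw => by rw [hup_rank w hw]]
    rw [← Finset.sum_div, ← Nat.cast_sum, Γ.key hΓ n v rfl]
    have h1 : ((n + 1).factorial : ℝ) = (n + 1) * n.factorial := by
      rw [Nat.factorial_succ]; push_cast; ring
    rw [h1]
    push_cast
    rw [mul_div_mul_left _ _ (by positivity : ((n : ℝ) + 1) ≠ 0)]
end

section
/- Let v be a finite Fibonacci word with 2's at positions d_1 < d_2 < … (so any two positions differ by at least 2). If d_1 ≠ 2 then |π_2(v)| ≥ π(v)^4, and if d_1 = 2 then |π_3(v)| ≥ π(v)^9, where π_k(v) = ∏_{j : d_j ≥ k−1}(1 − k/d_j) and π(v) = ∏_{j : d_j ≥ 2}(1 − 1/d_j). -/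
/-- A Fibonacci word: a finite word in the alphabet `{1,2}`. -/
def IsFibWord (v : List ℕ) : Prop := ∀ x ∈ v, x = 1 ∨ x = 2

/-- The list of positions of the `2`'s in a Fibonacci word (leftmost `2` first):
if `w = u ++ 2 :: v` then the position of the indicated `2` is `|v| + 1`, where
`|v|` is the sum of the digits of `v`. -/
def pos2 : List ℕ → List ℕ
  | [] => []
  | 2 :: t => (t.sum + 1) :: pos2 t
  | _ :: t => pos2 t

/-- `π(v) = ∏_{j : d_j ≥ 2} (1 − 1/d_j)`, the product over positions of `2`'s. -/
noncomputable def piWord (v : List ℕ) : ℝ :=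
  (((pos2 v).filter (fun d => decide (2 ≤ d))).map (fun d => 1 - 1 / (d : ℝ))).prod

/-- `π_k(v) = ∏_{j : d_j ≥ k−1} (1 − k/d_j)`, the product over positions of `2`'s. -/
noncomputable def piK (k : ℕ) (v : List ℕ) : ℝ :=
  (((pos2 v).filter (fun d => decide (k - 1 ≤ d))).map (fun d => 1 - (k : ℝ) / (d : ℝ))).prod

lemma pos2_cons (a : ℕ) (t : List ℕ) :
    pos2 (a :: t) = if a = 2 then (t.sum + 1) :: pos2 t else pos2 t := by
  match a with
  | 0 => simp [pos2]
  | 1 => simp [pos2]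
  | 2 => simp [pos2]
  | (n+3) => simp [pos2]

lemma pos2_pos : ∀ (v : List ℕ), ∀ d ∈ pos2 v, 1 ≤ d := by
  intro v
  induction v with
  | nil => simp [pos2]
  | cons a t ih =>
    rw [pos2_cons]
    split
    · intro d hd
      rw [List.mem_cons] at hd
      rcases hd with h | h
      · omega
      · exact ih d h
    · exact ih

lemma pos2_le_sum : ∀ (v : List ℕ), ∀ d ∈ pos2 v, d + 1 ≤ v.sum := by
  intro v
  induction v with
  | nil => simp [pos2]
  | cons a t ih =>
    rw [pos2_cons]
    split
    · rename_i ha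
      intro d hd
      rw [List.mem_cons] at hd
      rcases hd with h | h
      · subst ha h; simp; omega
      · have := ih d h; simp; omega
    · intro d hd; have := ih d hd; simp; omega

lemma pos2_pairwise (v : List ℕ) : (pos2 v).Pairwise (fun a b => b + 2 ≤ a) := by
  induction v with
  | nil => simp [pos2]
  | cons a t ih =>
    rw [pos2_cons]
    split
    · refine List.Pairwise.cons ?_ ih
      intro d hd
      have := pos2_le_sum t d hd
      omega
    · exact ih

lemma ineq4 (x : ℝ) (hx : 0 < x) (hx3 : x ≤ 1/3) : (1 - x)^4 ≤ 1 - 2*x := by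
  nlinarith [sq_nonneg x, mul_nonneg hx.le (sq_nonneg x), mul_nonneg (mul_nonneg hx.le hx.le) (sq_nonneg x), sq_nonneg (1-x)]

lemma ineq9 (x : ℝ) (hx : 0 < x) (hx4 : x ≤ 1/4) : (1 - x)^9 ≤ 1 - 3*x := by
  have h4 : (1 - x)^4 ≤ 1 - 2*x := ineq4 x hx (by linarith)
  have h1 : 0 ≤ 1 - x := by linarith
  have h2 : 0 ≤ 1 - 2*x := by linarith
  have : (1-x)^9 = ((1-x)^4)^2 * (1-x) := by ring
  rw [this]
  have hstep : ((1-x)^4)^2 ≤ (1-2*x)^2 := by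
    apply pow_le_pow_left₀ (by positivity) h4
  calc ((1-x)^4)^2 * (1-x) ≤ (1-2*x)^2 * (1-x) := by
        apply mul_le_mul_of_nonneg_right hstep h1
    _ ≤ 1 - 3*x := by nlinarith [sq_nonneg x, mul_nonneg hx.le (sq_nonneg x)]

noncomputable def f1 (L : List ℕ) : ℝ :=
  ((L.filter (fun d => decide (2 ≤ d))).map (fun d : ℕ => 1 - 1 / (d : ℝ))).prod

lemma f1_nonneg (L : List ℕ) : 0 ≤ f1 L := by
  apply List.prod_nonneg
  intro x hx
  simp only [List.mem_map, List.mem_filter] at hx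
  obtain ⟨d, ⟨_, hd⟩, rfl⟩ := hx
  have hd2 : (2:ℝ) ≤ d := by exact_mod_cast (by simpa using hd)
  have : 1/(d:ℝ) ≤ 1 := by
    rw [div_le_one (by linarith)]; linarith
  linarith

lemma key (L : List ℕ) (hp : L.Pairwise (fun a b => b + 2 ≤ a)) (h1 : ∀ d ∈ L, 1 ≤ d) :
    (2 ∉ L → f1 L ^ 4 ≤ |((L.filter (fun d => decide (1 ≤ d))).map (fun d : ℕ => 1 - 2 / (d : ℝ))).prod|) ∧
    (2 ∈ L → f1 L ^ 9 ≤ |((L.filter (fun d => decide (2 ≤ d))).map (fun d : ℕ => 1 - 3 / (d : ℝ))).prod|) := by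
  induction L with
  | nil => simp [f1]
  | cons d L' ih =>
    rw [List.pairwise_cons] at hp
    obtain ⟨hd, hp'⟩ := hp
    have ih' := ih hp' (fun e he => h1 e (List.mem_cons_of_mem d he))
    have h1d : 1 ≤ d := h1 d (by simp : d ∈ d :: L')
    constructor
    · intro h
      have hd2 : d ≠ 2 := fun hh => h (hh ▸ (by simp : d ∈ d :: L'))
      have hL2 : 2 ∉ L' := fun hh => h (List.mem_cons_of_mem d hh)
      have IH := ih'.1 hL2
      rcases (by omega : d = 1 ∨ 3 ≤ d) with rfl | hd3
      · have ea : f1 (1 :: L') = f1 L' := by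
          simp only [f1]
          rw [List.filter_cons_of_neg (by simp)]
        have eb : List.filter (fun d => decide (1 ≤ d)) (1 :: L')
            = 1 :: List.filter (fun d => decide (1 ≤ d)) L' := by
          rw [List.filter_cons_of_pos (by simp)]
        rw [ea, eb, List.map_cons, List.prod_cons]
        have ec : (1 - 2 / ((1:ℕ):ℝ)) = -1 := by norm_num
        rw [ec, abs_mul, abs_neg, abs_one, one_mul]
        exact IH
      · have ea : f1 (d :: L') = (1 - 1/(d:ℝ)) * f1 L' := by
          simp only [f1]
          rw [List.filter_cons_of_pos (by simp; omega)]
          simp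
        have eb : List.filter (fun d => decide (1 ≤ d)) (d :: L')
            = d :: List.filter (fun d => decide (1 ≤ d)) L' := by
          rw [List.filter_cons_of_pos (by simp; omega)]
        rw [ea, eb, List.map_cons, List.prod_cons]
        rw [abs_mul, mul_pow]
        have hdr : (3:ℝ) ≤ d := by exact_mod_cast hd3
        have hd0 : (0:ℝ) < d := by linarith
        have hx : (0:ℝ) < 1/d := by positivity
        have hx3 : (1:ℝ)/d ≤ 1/3 := by
          rw [div_le_div_iff₀ hd0 (by norm_num)]; linarith
        have hkey : (1 - 1/(d:ℝ))^4 ≤ 1 - 2/d := by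
          have := ineq4 (1/(d:ℝ)) hx hx3
          calc (1 - 1/(d:ℝ))^4 ≤ 1 - 2*(1/d) := this
            _ = 1 - 2/d := by ring
        have habs : |1 - 2/(d:ℝ)| = 1 - 2/d := by
          rw [abs_of_nonneg]
          rw [sub_nonneg, div_le_one hd0]; linarith
        rw [habs]
        apply mul_le_mul hkey IH (pow_nonneg (f1_nonneg L') 4)
          (by rw [sub_nonneg, div_le_one hd0]; linarith)
    · intro h
      rw [List.mem_cons] at h
      rcases h with h2 | hL2
      · subst h2
        have hL' : L' = [] := by
          rw [List.eq_nil_iff_forall_not_mem]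
          intro e he
          have := hd e he
          have := h1 e (List.mem_cons_of_mem _ he)
          omega
        subst hL'
        simp only [f1]
        norm_num
      · have hd4 : 4 ≤ d := by have := hd 2 hL2; omega
        have IH := ih'.2 hL2
        have ea : f1 (d :: L') = (1 - 1/(d:ℝ)) * f1 L' := by
          simp only [f1]
          rw [List.filter_cons_of_pos (by simp; omega)]
          simp
        have eb : List.filter (fun d => decide (2 ≤ d)) (d :: L')
            = d :: List.filter (fun d => decide (2 ≤ d)) L' := by
          rw [List.filter_cons_of_pos (by simp; omega)]
        rw [ea, eb, List.map_cons, List.prod_cons]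
        rw [abs_mul, mul_pow]
        have hdr : (4:ℝ) ≤ d := by exact_mod_cast hd4
        have hd0 : (0:ℝ) < d := by linarith
        have hx : (0:ℝ) < 1/d := by positivity
        have hx4 : (1:ℝ)/d ≤ 1/4 := by
          rw [div_le_div_iff₀ hd0 (by norm_num)]; linarith
        have hkey : (1 - 1/(d:ℝ))^9 ≤ 1 - 3/d := by
          have := ineq9 (1/(d:ℝ)) hx hx4
          calc (1 - 1/(d:ℝ))^9 ≤ 1 - 3*(1/d) := this
            _ = 1 - 3/d := by ring
        have habs : |1 - 3/(d:ℝ)| = 1 - 3/d := by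
          rw [abs_of_nonneg]
          rw [sub_nonneg, div_le_one hd0]; linarith
        rw [habs]
        apply mul_le_mul hkey IH (pow_nonneg (f1_nonneg L') 9)
          (by rw [sub_nonneg, div_le_one hd0]; linarith)

lemma map_flatMap_coe (f : ℝ → ℝ) (L : List ℕ) :
    List.map f (L.flatMap fun (a : ℕ) => [(a : ℝ)]) = L.map (fun d : ℕ => f d) := by
  induction L with
  | nil => simp
  | cons a t ih => simp only [List.flatMap_cons, List.map_append, List.map_cons, List.map_nil, ih, List.singleton_append]

/-- If the smallest position `d_1` of a `2` in the Fibonacci word `v` is not `2`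
(in particular if `v` has no `2`'s), then `|π_2(v)| ≥ π(v)^4`; and if `d_1 = 2`,
then `|π_3(v)| ≥ π(v)^9`. -/
theorem stmt_19 (v : List ℕ) (hv : IsFibWord v) :
    (2 ∉ pos2 v → piWord v ^ 4 ≤ |piK 2 v|) ∧
    (2 ∈ pos2 v → piWord v ^ 9 ≤ |piK 3 v|) := by
  have K := key (pos2 v) (pos2_pairwise v) (pos2_pos v)
  constructor
  · intro h
    have := K.1 h
    simpa [piWord, piK, f1, map_flatMap_coe] using this
  · intro h
    have := K.2 h
    simpa [piWord, piK, f1, map_flatMap_coe] using this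
end
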